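/- arXiv:2105.09381 — 2 statements merged into one kernel-verified Lean document; each statement's English description precedes it below -/
import Mathlib

section
/- Let (Ω, ℱ, ℙ) be a probability space carrying random variables A₀, A₁, B₀, B₁, B₂, C₀, C₁, each taking values in {−1, +1} (this is exactly a local-hidden-variable / shared-randomness model of the tripartite experiment, where all response variables are jointly defined). Assume ℙ(C₁ = 1) > 0. Then I_Bell^{C₁=1} + 4·I_same ≤ 10, where I_Bell^{C₁=1} := E[A₀B₀ | C₁=1] + E[A₀B₁ | C₁=1] + E[A₁B₀ | C₁=1] − E[A₁B₁ | C₁=1] and I_same := E[A₀B₂] + E[B₂C₀]. -/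
open MeasureTheory

lemma pm_integrable {Ω : Type*} [MeasurableSpace Ω] (μ : Measure Ω)
    [IsFiniteMeasure μ] {f g : Ω → ℝ}
    (hf : Measurable f) (hg : Measurable g)
    (hvf : ∀ ω, f ω = 1 ∨ f ω = -1) (hvg : ∀ ω, g ω = 1 ∨ g ω = -1) :
    Integrable (fun ω => f ω * g ω) μ := by
  refine ⟨(hf.mul hg).aestronglyMeasurable, ?_⟩
  apply HasFiniteIntegral.of_bounded (C := 1)
  filter_upwards with ω
  rcases hvf ω with h1 | h1 <;> rcases hvg ω with h2 | h2 <;>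
    simp [h1, h2]

lemma pm_integral_le_one {Ω : Type*} [MeasurableSpace Ω] (μ : Measure Ω)
    [IsProbabilityMeasure μ] {f g : Ω → ℝ}
    (hf : Measurable f) (hg : Measurable g)
    (hvf : ∀ ω, f ω = 1 ∨ f ω = -1) (hvg : ∀ ω, g ω = 1 ∨ g ω = -1) :
    (∫ ω, f ω * g ω ∂μ) ≤ 1 := by
  calc (∫ ω, f ω * g ω ∂μ) ≤ ∫ _ω, (1 : ℝ) ∂μ := by
        apply integral_mono (pm_integrable μ hf hg hvf hvg) (integrable_const 1)
        intro ω
        rcases hvf ω with h1 | h1 <;> rcases hvg ω with h2 | h2 <;>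
          simp [h1, h2]
    _ = 1 := by simp

/-- In any local-hidden-variable / shared-randomness model of the
tripartite experiment (all seven ±1-valued response variables defined on one
probability space), if ℙ(C₁ = 1) > 0 then
`I_Bell^{C₁=1} + 4·I_same ≤ 10`, where
`I_Bell^{C₁=1} = E[A₀B₀|C₁=1] + E[A₀B₁|C₁=1] + E[A₁B₀|C₁=1] − E[A₁B₁|C₁=1]` and
`I_same = E[A₀B₂] + E[B₂C₀]`. -/
theorem lhv_conditioned_chsh_plus_same_le_ten
    {Ω : Type*} [MeasurableSpace Ω] (μ : Measure Ω) [IsProbabilityMeasure μ]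
    (A₀ A₁ B₀ B₁ B₂ C₀ C₁ : Ω → ℝ)
    (hA₀ : Measurable A₀) (hA₁ : Measurable A₁)
    (hB₀ : Measurable B₀) (hB₁ : Measurable B₁) (hB₂ : Measurable B₂)
    (hC₀ : Measurable C₀) (hC₁ : Measurable C₁)
    (hvA₀ : ∀ ω, A₀ ω = 1 ∨ A₀ ω = -1) (hvA₁ : ∀ ω, A₁ ω = 1 ∨ A₁ ω = -1)
    (hvB₀ : ∀ ω, B₀ ω = 1 ∨ B₀ ω = -1) (hvB₁ : ∀ ω, B₁ ω = 1 ∨ B₁ ω = -1)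
    (hvB₂ : ∀ ω, B₂ ω = 1 ∨ B₂ ω = -1)
    (hvC₀ : ∀ ω, C₀ ω = 1 ∨ C₀ ω = -1) (hvC₁ : ∀ ω, C₁ ω = 1 ∨ C₁ ω = -1)
    (hpos : 0 < μ (C₁ ⁻¹' {1})) :
    (μ (C₁ ⁻¹' {1})).toReal⁻¹ *
        ((∫ ω in C₁ ⁻¹' {1}, A₀ ω * B₀ ω ∂μ) +
         (∫ ω in C₁ ⁻¹' {1}, A₀ ω * B₁ ω ∂μ) +
         (∫ ω in C₁ ⁻¹' {1}, A₁ ω * B₀ ω ∂μ) -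
         (∫ ω in C₁ ⁻¹' {1}, A₁ ω * B₁ ω ∂μ)) +
      4 * ((∫ ω, A₀ ω * B₂ ω ∂μ) + (∫ ω, B₂ ω * C₀ ω ∂μ)) ≤ 10 := by
  set s := C₁ ⁻¹' {1} with hs
  have hsm : MeasurableSet s := hC₁ (measurableSet_singleton 1)
  have hμs : μ s ≠ ⊤ := (measure_lt_top μ s).ne
  have hts : 0 < (μ s).toReal := ENNReal.toReal_pos hpos.ne' hμs
  -- integrability on restricted measure
  have int1 : Integrable (fun ω => A₀ ω * B₀ ω) (μ.restrict s) :=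
    (pm_integrable μ hA₀ hB₀ hvA₀ hvB₀).restrict
  have int2 : Integrable (fun ω => A₀ ω * B₁ ω) (μ.restrict s) :=
    (pm_integrable μ hA₀ hB₁ hvA₀ hvB₁).restrict
  have int3 : Integrable (fun ω => A₁ ω * B₀ ω) (μ.restrict s) :=
    (pm_integrable μ hA₁ hB₀ hvA₁ hvB₀).restrict
  have int4 : Integrable (fun ω => A₁ ω * B₁ ω) (μ.restrict s) :=
    (pm_integrable μ hA₁ hB₁ hvA₁ hvB₁).restrict
  have int12 : Integrable (fun ω => A₀ ω * B₀ ω + A₀ ω * B₁ ω) (μ.restrict s) :=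
    int1.add int2
  have int123 : Integrable (fun ω => A₀ ω * B₀ ω + A₀ ω * B₁ ω + A₁ ω * B₀ ω)
      (μ.restrict s) := int12.add int3
  have hsum : (∫ ω in s, A₀ ω * B₀ ω ∂μ) + (∫ ω in s, A₀ ω * B₁ ω ∂μ) +
      (∫ ω in s, A₁ ω * B₀ ω ∂μ) - (∫ ω in s, A₁ ω * B₁ ω ∂μ)
      = ∫ ω in s, (A₀ ω * B₀ ω + A₀ ω * B₁ ω + A₁ ω * B₀ ω - A₁ ω * B₁ ω) ∂μ := by
    rw [integral_sub int123 int4, integral_add int12 int3, integral_add int1 int2]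
  have hchsh : (∫ ω in s, (A₀ ω * B₀ ω + A₀ ω * B₁ ω + A₁ ω * B₀ ω - A₁ ω * B₁ ω) ∂μ)
      ≤ 2 * (μ s).toReal := by
    calc _ ≤ ∫ _ω in s, (2 : ℝ) ∂μ := by
          apply integral_mono (int123.sub int4)
            (integrable_const 2)
          intro ω
          rcases hvA₀ ω with h1 | h1 <;> rcases hvA₁ ω with h2 | h2 <;>
            rcases hvB₀ ω with h3 | h3 <;> rcases hvB₁ ω with h4 | h4 <;>
            simp [h1, h2, h3, h4] <;> norm_num
      _ = 2 * (μ s).toReal := by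
          rw [setIntegral_const]; rw [smul_eq_mul, mul_comm]; rfl
  have hbell : (μ s).toReal⁻¹ *
      ((∫ ω in s, A₀ ω * B₀ ω ∂μ) + (∫ ω in s, A₀ ω * B₁ ω ∂μ) +
       (∫ ω in s, A₁ ω * B₀ ω ∂μ) - (∫ ω in s, A₁ ω * B₁ ω ∂μ)) ≤ 2 := by
    rw [hsum]
    rw [inv_mul_le_iff₀ hts]
    calc _ ≤ 2 * (μ s).toReal := hchsh
      _ = (μ s).toReal * 2 := mul_comm _ _
  have h5 := pm_integral_le_one μ hA₀ hB₂ hvA₀ hvB₂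
  have h6 := pm_integral_le_one μ hB₂ hC₀ hvB₂ hvC₀
  linarith
end

section
/- Let |GHZ⟩ = (|000⟩ + |111⟩)/√2 ∈ ℂ² ⊗ ℂ² ⊗ ℂ², let Z and X be the Pauli matrices, and let Π₊ = (I + X)/2 be the projector onto |+⟩ on Charlie's qubit. Define the strategy A₀ = Z, A₁ = X (Alice), B₀ = (Z+X)/√2, B₁ = (Z−X)/√2, B₂ = Z (Bob), C₀ = Z (Charlie's first input), and let Charlie's second input be a Hadamard-basis measurement with outcome C₁ = 1 corresponding to Π₊. Then: (i) ⟨GHZ| I⊗I⊗X |GHZ⟩ = 0, i.e. ⟨C₁⟩ = 0; (ii) ⟨GHZ| A₀⊗B₂⊗I |GHZ⟩ = 1 and ⟨GHZ| I⊗B₂⊗C₀ |GHZ⟩ = 1, so I_same = 2; (iii) the conditional CHSH value I_Bell^{C₁=1} := (Σ_{(x,y)≠(1,1)} ⟨GHZ| A_x⊗B_y⊗Π₊ |GHZ⟩ − ⟨GHZ| A₁⊗B₁⊗Π₊ |GHZ⟩) / ⟨GHZ| I⊗I⊗Π₊ |GHZ⟩ equals 2√2. Consequently I_Bell^{C₁=1}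 + 4·I_same = 2√2 + 8 > 10. -/
open Matrix
open scoped Kronecker BigOperators

/-- The Pauli matrix `Z = [[1,0],[0,−1]]`. -/
noncomputable def pauliZ : Matrix (Fin 2) (Fin 2) ℂ := !![1, 0; 0, -1]

/-- The Pauli matrix `X = [[0,1],[1,0]]`. -/
noncomputable def pauliX : Matrix (Fin 2) (Fin 2) ℂ := !![0, 1; 1, 0]

/-- Bob's observable `B₀ = (Z+X)/√2`. -/
noncomputable def bobB₀ : Matrix (Fin 2) (Fin 2) ℂ :=
  (Real.sqrt 2 : ℂ)⁻¹ • (pauliZ + pauliX)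

/-- Bob's observable `B₁ = (Z−X)/√2`. -/
noncomputable def bobB₁ : Matrix (Fin 2) (Fin 2) ℂ :=
  (Real.sqrt 2 : ℂ)⁻¹ • (pauliZ - pauliX)

/-- The projector `Π₊ = (I + X)/2` onto `|+⟩`. -/
noncomputable def projPlus : Matrix (Fin 2) (Fin 2) ℂ :=
  (2 : ℂ)⁻¹ • ((1 : Matrix (Fin 2) (Fin 2) ℂ) + pauliX)

/-- The GHZ state `(|000⟩ + |111⟩)/√2` as a vector in ℂ²⊗ℂ²⊗ℂ². -/
noncomputable def ketGHZ : Fin 2 × Fin 2 × Fin 2 → ℂ :=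
  fun t => if t.1 = t.2.1 ∧ t.2.1 = t.2.2 then (Real.sqrt 2 : ℂ)⁻¹ else 0

/-- The expectation value `⟨GHZ| M |GHZ⟩` of a three-qubit operator `M`. -/
noncomputable def ghzExp
    (M : Matrix (Fin 2 × Fin 2 × Fin 2) (Fin 2 × Fin 2 × Fin 2) ℂ) : ℂ :=
  star ketGHZ ⬝ᵥ M.mulVec ketGHZ





lemma sqrt2_sq : ((Real.sqrt 2 : ℝ) : ℂ) * ((Real.sqrt 2 : ℝ) : ℂ) = 2 := by
  rw [← Complex.ofReal_mul, Real.mul_self_sqrt (by norm_num)]; norm_num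

lemma sqrt2_ne : ((Real.sqrt 2 : ℝ) : ℂ) ≠ 0 := by
  simp [Real.sqrt_ne_zero'.2 (show (0:ℝ) < 2 by norm_num)]

lemma ghzExp_eq (M : Matrix (Fin 2 × Fin 2 × Fin 2) (Fin 2 × Fin 2 × Fin 2) ℂ) :
    ghzExp M = (M (0,0,0) (0,0,0) + M (0,0,0) (1,1,1)
      + M (1,1,1) (0,0,0) + M (1,1,1) (1,1,1)) / 2 := by
  simp only [ghzExp, dotProduct, mulVec, Fintype.sum_prod_type, Fin.sum_univ_two,
    ketGHZ, Pi.star_apply]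
  norm_num
  field_simp
  rw [sq, sqrt2_sq]
  ring

lemma e1 : ghzExp ((1 : Matrix (Fin 2) (Fin 2) ℂ) ⊗ₖ
    ((1 : Matrix (Fin 2) (Fin 2) ℂ) ⊗ₖ pauliX)) = 0 := by
  simp [ghzExp_eq, pauliX, one_apply]

lemma e2 : ghzExp (pauliZ ⊗ₖ (pauliZ ⊗ₖ (1 : Matrix (Fin 2) (Fin 2) ℂ))) = 1 := by
  simp [ghzExp_eq, pauliZ, one_apply]

lemma e3 : ghzExp ((1 : Matrix (Fin 2) (Fin 2) ℂ) ⊗ₖ (pauliZ ⊗ₖ pauliZ)) = 1 := by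
  simp [ghzExp_eq, pauliZ, one_apply]

lemma e4 : ghzExp (pauliZ ⊗ₖ (bobB₀ ⊗ₖ projPlus)) = (2 * (Real.sqrt 2 : ℂ))⁻¹ := by
  simp [ghzExp_eq, pauliZ, pauliX, bobB₀, projPlus, one_apply]

lemma e5 : ghzExp (pauliZ ⊗ₖ (bobB₁ ⊗ₖ projPlus)) = (2 * (Real.sqrt 2 : ℂ))⁻¹ := by
  simp [ghzExp_eq, pauliZ, pauliX, bobB₁, projPlus, one_apply]

lemma e6 : ghzExp (pauliX ⊗ₖ (bobB₀ ⊗ₖ projPlus)) = (2 * (Real.sqrt 2 : ℂ))⁻¹ := by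
  simp [ghzExp_eq, pauliZ, pauliX, bobB₀, projPlus, one_apply]

lemma e7 : ghzExp (pauliX ⊗ₖ (bobB₁ ⊗ₖ projPlus)) = -(2 * (Real.sqrt 2 : ℂ))⁻¹ := by
  simp [ghzExp_eq, pauliZ, pauliX, bobB₁, projPlus, one_apply]

lemma e8 : ghzExp ((1 : Matrix (Fin 2) (Fin 2) ℂ) ⊗ₖ
    ((1 : Matrix (Fin 2) (Fin 2) ℂ) ⊗ₖ projPlus)) = 2⁻¹ := by
  simp [ghzExp_eq, pauliX, projPlus, one_apply]

lemma sqrt2_gt : (10 : ℝ) < 2 * Real.sqrt 2 + 8 := by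
  nlinarith [Real.sq_sqrt (show (0:ℝ) ≤ 2 by norm_num), Real.sqrt_nonneg 2]

lemma chsh_val :
    (ghzExp (pauliZ ⊗ₖ (bobB₀ ⊗ₖ projPlus)) +
     ghzExp (pauliZ ⊗ₖ (bobB₁ ⊗ₖ projPlus)) +
     ghzExp (pauliX ⊗ₖ (bobB₀ ⊗ₖ projPlus)) -
     ghzExp (pauliX ⊗ₖ (bobB₁ ⊗ₖ projPlus))) /
        ghzExp ((1 : Matrix (Fin 2) (Fin 2) ℂ) ⊗ₖ ((1 : Matrix (Fin 2) (Fin 2) ℂ) ⊗ₖ projPlus))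
      = 2 * (Real.sqrt 2 : ℂ) := by
  rw [e4, e5, e6, e7, e8]
  field_simp
  rw [sq, sqrt2_sq]
  norm_num

/-- For the strategy `A₀ = Z, A₁ = X, B₀ = (Z+X)/√2,
`B₁ = (Z−X)/√2, B₂ = Z, C₀ = Z` and Charlie's outcome `C₁ = 1` given by `Π₊`,
on the GHZ state: (i) `⟨C₁⟩ = ⟨I⊗I⊗X⟩ = 0`; (ii) `⟨A₀⊗B₂⊗I⟩ = ⟨I⊗B₂⊗C₀⟩ = 1`,
so `I_same = 2`; (iii) the conditional CHSH value `I_Bell^{C₁=1} = 2√2`;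
consequently `I_Bell^{C₁=1} + 4·I_same = 2√2 + 8 > 10`. -/
theorem ghz_strategy_violation :
    ghzExp ((1 : Matrix (Fin 2) (Fin 2) ℂ) ⊗ₖ ((1 : Matrix (Fin 2) (Fin 2) ℂ) ⊗ₖ pauliX)) = 0 ∧
    ghzExp (pauliZ ⊗ₖ (pauliZ ⊗ₖ (1 : Matrix (Fin 2) (Fin 2) ℂ))) = 1 ∧
    ghzExp ((1 : Matrix (Fin 2) (Fin 2) ℂ) ⊗ₖ (pauliZ ⊗ₖ pauliZ)) = 1 ∧
    (ghzExp (pauliZ ⊗ₖ (bobB₀ ⊗ₖ projPlus)) +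
     ghzExp (pauliZ ⊗ₖ (bobB₁ ⊗ₖ projPlus)) +
     ghzExp (pauliX ⊗ₖ (bobB₀ ⊗ₖ projPlus)) -
     ghzExp (pauliX ⊗ₖ (bobB₁ ⊗ₖ projPlus))) /
        ghzExp ((1 : Matrix (Fin 2) (Fin 2) ℂ) ⊗ₖ ((1 : Matrix (Fin 2) (Fin 2) ℂ) ⊗ₖ projPlus))
      = 2 * (Real.sqrt 2 : ℂ) ∧
    (ghzExp (pauliZ ⊗ₖ (bobB₀ ⊗ₖ projPlus)) +
     ghzExp (pauliZ ⊗ₖ (bobB₁ ⊗ₖ projPlus)) +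
     ghzExp (pauliX ⊗ₖ (bobB₀ ⊗ₖ projPlus)) -
     ghzExp (pauliX ⊗ₖ (bobB₁ ⊗ₖ projPlus))) /
        ghzExp ((1 : Matrix (Fin 2) (Fin 2) ℂ) ⊗ₖ ((1 : Matrix (Fin 2) (Fin 2) ℂ) ⊗ₖ projPlus))
      + 4 * (ghzExp (pauliZ ⊗ₖ (pauliZ ⊗ₖ (1 : Matrix (Fin 2) (Fin 2) ℂ))) +
             ghzExp ((1 : Matrix (Fin 2) (Fin 2) ℂ) ⊗ₖ (pauliZ ⊗ₖ pauliZ)))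
      = ((2 * Real.sqrt 2 + 8 : ℝ) : ℂ) ∧
    (10 : ℝ) < 2 * Real.sqrt 2 + 8 := by
  refine ⟨e1, e2, e3, chsh_val, ?_, sqrt2_gt⟩
  rw [chsh_val, e2, e3]
  push_cast
  ring
end
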